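/- Let L > 0 and [a, b] ⊆ [0, L] with a < b. For every ρ ∈ [−1, 0] and every x ∈ [0, L]: F_{a,b}(x, ρ, L) ≤ (b − a)(x + 1) + Q_{a,b}(x). -/

import Mathlib

open MeasureTheory ProbabilityTheory Real Filter Set
open scoped ENNReal NNReal

noncomputable section

/-- The standard Laplace distribution on `ℝ`, with density `t ↦ (1/2)·e^{−|t|}`. -/
def lapMeasure : Measure ℝ :=
  MeasureTheory.volume.withDensity fun t => ENNReal.ofReal ((1 / 2) * Real.exp (-|t|))

variable {Ω : Type*} [MeasurableSpace Ω]

/-- `(X i)` are i.i.d. standard Laplace random variables on the probability space `(Ω, μ)`. -/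
structure IsLaplaceWalk (μ : Measure Ω) (X : ℕ → Ω → ℝ) : Prop where
  prob : IsProbabilityMeasure μ
  meas : ∀ i, Measurable (X i)
  indep : iIndepFun X μ
  dist : ∀ i, μ.map (X i) = lapMeasure

/-- The random walk `S_k = x + X_1 + ⋯ + X_k` started at `x`. -/
def walk (x : ℝ) (X : ℕ → Ω → ℝ) (k : ℕ) (ω : Ω) : ℝ :=
  x + ∑ i ∈ Finset.range k, X i ω

/-- The exit time `τ_L = min{k : S_k ∉ [0,L]}` of the walk started at `x`. -/
def exitTime (L x : ℝ) (X : ℕ → Ω → ℝ) (ω : Ω) : ℕ :=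
  sInf {k | walk x X k ω ∉ Set.Icc 0 L}

/-- `ρ_L^*`: the smallest `ρ ≥ 0` with `cos(√ρ·L/2) − √ρ·sin(√ρ·L/2) = 0`. -/
def rhoStar (L : ℝ) : ℝ :=
  sInf {ρ : ℝ | 0 ≤ ρ ∧
    Real.cos (Real.sqrt ρ * L / 2) - Real.sqrt ρ * Real.sin (Real.sqrt ρ * L / 2) = 0}

/-- `Q_{a,b}(x) = 1 − cos(2π(x−a)/(b−a))` on `[a,b]`, and `0` elsewhere. -/
def Qfun (a b x : ℝ) : ℝ :=
  if x ∈ Set.Icc a b then 1 - Real.cos (2 * Real.pi * (x - a) / (b - a)) else 0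

/-- `F_{a,b}(x, ρ, L) = E_x[Σ_{k=0}^{τ_L−1} (1+ρ)^k Q_{a,b}(S_k)]`, written as the Lebesgue
integral of `Σ_k (1+ρ)^k Q_{a,b}(S_k) 1{S_i ∈ [0,L] ∀ i ≤ k}` (the summand vanishes for
`k ≥ τ_L`). -/
def Ffun (μ : Measure Ω) (X : ℕ → Ω → ℝ) (a b ρ L x : ℝ) : ℝ≥0∞ :=
  ∫⁻ ω, ∑' k : ℕ,
    (if ∀ i ≤ k, walk x X i ω ∈ Set.Icc 0 L
      then ENNReal.ofReal ((1 + ρ) ^ k * Qfun a b (walk x X k ω)) else 0) ∂μ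

namespace StatAux

lemma Qfun_nonneg (a b x : ℝ) : 0 ≤ Qfun a b x := by
  unfold Qfun; split_ifs with h
  · have := Real.cos_le_one (2 * Real.pi * (x - a) / (b - a)); linarith
  · exact le_refl _

lemma Qfun_le_two (a b x : ℝ) : Qfun a b x ≤ 2 := by
  unfold Qfun; split_ifs with h
  · have := Real.neg_one_le_cos (2 * Real.pi * (x - a) / (b - a)); linarith
  · norm_num

lemma Qfun_eq_piecewise (a b : ℝ) : Qfun a b =
    (Set.Icc a b).piecewise (fun x => 1 - Real.cos (2 * Real.pi * (x - a) / (b - a)))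
      (fun _ => 0) := by
  ext x; by_cases hx : x ∈ Set.Icc a b <;> simp [Qfun, Set.piecewise, hx]

lemma measurable_Qfun (a b : ℝ) : Measurable (Qfun a b) := by
  rw [Qfun_eq_piecewise]
  exact Measurable.piecewise measurableSet_Icc (by fun_prop) measurable_const

lemma continuous_Qfun {a b : ℝ} (hab : a < b) : Continuous (Qfun a b) := by
  rw [Qfun_eq_piecewise]
  refine Continuous.piecewise ?_ (by fun_prop) continuous_const
  intro y hy
  rw [frontier_Icc hab.le] at hy
  rcases hy with h | h
  · rw [h]; norm_num
  · simp only [Set.mem_singleton_iff] at h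
    rw [h, mul_div_assoc, div_self (sub_ne_zero.2 hab.ne'), mul_one, Real.cos_two_pi]
    ring

lemma Qfun_eq_zero_of_le {a b x : ℝ} (hx : x ≤ a) : Qfun a b x = 0 := by
  unfold Qfun; split_ifs with h
  · have : x = a := le_antisymm hx h.1
    subst this; simp
  · rfl

lemma Qfun_eq_zero_of_ge {a b x : ℝ} (hab : a < b) (hx : b ≤ x) : Qfun a b x = 0 := by
  unfold Qfun; split_ifs with h
  · have : x = b := le_antisymm h.2 hx
    subst this
    rw [mul_div_assoc, div_self (sub_ne_zero.2 hab.ne'), mul_one, Real.cos_two_pi]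
    ring
  · rfl

end StatAux

namespace StatAux

/-- primitive of `Q`. -/
def Af (a b y : ℝ) : ℝ := ∫ t in (0:ℝ)..y, Qfun a b t

/-- primitive of `t·Q t`. -/
def Bf (a b y : ℝ) : ℝ := ∫ t in (0:ℝ)..y, t * Qfun a b t

/-- The explicit supersolution minus `Q`. -/
def uf (a b y : ℝ) : ℝ := (b - a) * (1 + y) - (y * Af a b y - Bf a b y)

/-- Derivative of `uf`. -/
def uf' (a b y : ℝ) : ℝ := (b - a) - Af a b y

/-- The explicit supersolution. -/
def hfun (a b y : ℝ) : ℝ := Qfun a b y + uf a b y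

variable {a b L : ℝ}

lemma hasDerivAt_Af (hab : a < b) (y : ℝ) : HasDerivAt (Af a b) (Qfun a b y) y := by
  have hc : Continuous (Qfun a b) := continuous_Qfun hab
  exact intervalIntegral.integral_hasDerivAt_right (hc.intervalIntegrable _ _)
    hc.stronglyMeasurable.stronglyMeasurableAtFilter hc.continuousAt

lemma hasDerivAt_Bf (hab : a < b) (y : ℝ) :
    HasDerivAt (Bf a b) (y * Qfun a b y) y := by
  have hc : Continuous (fun t => t * Qfun a b t) := continuous_id.mul (continuous_Qfun hab)
  exact intervalIntegral.integral_hasDerivAt_right (hc.intervalIntegrable _ _)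
    hc.stronglyMeasurable.stronglyMeasurableAtFilter hc.continuousAt

lemma continuous_Af (hab : a < b) : Continuous (Af a b) :=
  continuous_iff_continuousAt.2 fun y => (hasDerivAt_Af hab y).continuousAt

lemma continuous_Bf (hab : a < b) : Continuous (Bf a b) :=
  continuous_iff_continuousAt.2 fun y => (hasDerivAt_Bf hab y).continuousAt

lemma continuous_uf (hab : a < b) : Continuous (uf a b) := by
  unfold uf
  exact (continuous_const.mul (continuous_const.add continuous_id)).sub
    ((continuous_id.mul (continuous_Af hab)).sub (continuous_Bf hab))

lemma hasDerivAt_uf (hab : a < b) (y : ℝ) : HasDerivAt (uf a b) (uf' a b y) y := by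
  have h1 : HasDerivAt (fun y : ℝ => (b - a) * (1 + y)) (b - a) y := by
    simpa using ((hasDerivAt_id y).const_add (1:ℝ)).const_mul (b - a)
  have h2 : HasDerivAt (fun y => y * Af a b y) (1 * Af a b y + y * Qfun a b y) y :=
    (hasDerivAt_id y).mul (hasDerivAt_Af hab y)
  have h3 := hasDerivAt_Bf hab y
  have := h1.sub (h2.sub h3)
  refine this.congr_deriv ?_
  unfold uf'; ring

lemma hasDerivAt_uf' (hab : a < b) (y : ℝ) : HasDerivAt (uf' a b) (-Qfun a b y) y := by
  have := (hasDerivAt_Af hab y).const_sub (b - a)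
  exact this

lemma continuous_uf' (hab : a < b) : Continuous (uf' a b) :=
  continuous_const.sub (continuous_Af hab)

lemma continuous_hfun (hab : a < b) : Continuous (hfun a b) :=
  (continuous_Qfun hab).add (continuous_uf hab)

lemma Af_zero : Af a b 0 = 0 := intervalIntegral.integral_same

lemma Bf_zero : Bf a b 0 = 0 := intervalIntegral.integral_same

lemma uf_zero : uf a b 0 = b - a := by simp [uf, Af_zero, Bf_zero]

lemma uf'_zero : uf' a b 0 = b - a := by simp [uf', Af_zero]

lemma integral_Q_ab (hab : a < b) : ∫ t in a..b, Qfun a b t = b - a := by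
  have hne : b - a ≠ 0 := sub_ne_zero.2 hab.ne'
  have hQ : EqOn (Qfun a b) (fun t => 1 - Real.cos (2 * Real.pi * (t - a) / (b - a)))
      (Set.uIcc a b) := by
    intro t ht
    rw [Set.uIcc_of_le hab.le] at ht
    exact if_pos ht
  rw [intervalIntegral.integral_congr hQ]
  have hderiv : ∀ t ∈ Set.uIcc a b,
      HasDerivAt (fun t => t - (b - a) / (2 * Real.pi) * Real.sin (2 * Real.pi * (t - a) / (b - a)))
        (1 - Real.cos (2 * Real.pi * (t - a) / (b - a))) t := by
    intro t _
    have hw : HasDerivAt (fun t : ℝ => 2 * Real.pi * (t - a) / (b - a))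
        (2 * Real.pi / (b - a)) t := by
      simpa using (((hasDerivAt_id t).sub_const a).const_mul (2 * Real.pi)).div_const (b - a)
    have hs := hw.sin
    have := ((hasDerivAt_id t).sub ((hs.const_mul ((b - a) / (2 * Real.pi)))))
    refine this.congr_deriv ?_
    have hπ : (2 : ℝ) * Real.pi ≠ 0 := by positivity
    field_simp
  rw [intervalIntegral.integral_eq_sub_of_hasDerivAt hderiv ((Continuous.intervalIntegrable (by fun_prop) _ _))]
  rw [mul_div_assoc, div_self hne, mul_one, Real.sin_two_pi]
  simp

lemma integral_Q_zero_left (ha : 0 ≤ a) : ∫ t in (0:ℝ)..a, Qfun a b t = 0 := by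
  have hQ : EqOn (Qfun a b) (fun _ => (0:ℝ)) (Set.uIcc 0 a) := by
    intro t ht
    rw [Set.uIcc_of_le ha] at ht
    exact Qfun_eq_zero_of_le ht.2
  rw [intervalIntegral.integral_congr hQ]
  simp

lemma integral_Q_zero_right (hab : a < b) {y : ℝ} (hy : b ≤ y) :
    ∫ t in b..y, Qfun a b t = 0 := by
  have hQ : EqOn (Qfun a b) (fun _ => (0:ℝ)) (Set.uIcc b y) := by
    intro t ht
    rw [Set.uIcc_of_le hy] at ht
    exact Qfun_eq_zero_of_ge hab ht.1
  rw [intervalIntegral.integral_congr hQ]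
  simp

lemma Af_eq_of_ge (ha : 0 ≤ a) (hab : a < b) {y : ℝ} (hy : b ≤ y) : Af a b y = b - a := by
  have hc : Continuous (Qfun a b) := continuous_Qfun hab
  have h1 : Af a b y = (∫ t in (0:ℝ)..a, Qfun a b t) + ((∫ t in a..b, Qfun a b t)
      + ∫ t in b..y, Qfun a b t) := by
    unfold Af
    rw [intervalIntegral.integral_add_adjacent_intervals (hc.intervalIntegrable _ _)
      (hc.intervalIntegrable _ _),
      intervalIntegral.integral_add_adjacent_intervals (hc.intervalIntegrable _ _)
      (hc.intervalIntegrable _ _)]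
  rw [h1, integral_Q_zero_left ha, integral_Q_zero_right hab hy, integral_Q_ab hab]
  ring

lemma Af_nonneg (hy : 0 ≤ y) : 0 ≤ Af a b y :=
  intervalIntegral.integral_nonneg hy fun t _ => Qfun_nonneg a b t

lemma Af_le (ha : 0 ≤ a) (hab : a < b) {y : ℝ} (hy : 0 ≤ y) : Af a b y ≤ b - a := by
  have hc : Continuous (Qfun a b) := continuous_Qfun hab
  rcases le_or_gt b y with h | h
  · exact (Af_eq_of_ge ha hab h).le
  · have key : Af a b y + (∫ t in y..b, Qfun a b t) = Af a b b := by
      unfold Af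
      exact intervalIntegral.integral_add_adjacent_intervals (hc.intervalIntegrable _ _)
        (hc.intervalIntegrable _ _)
    have hnn : 0 ≤ ∫ t in y..b, Qfun a b t :=
      intervalIntegral.integral_nonneg h.le fun t _ => Qfun_nonneg a b t
    have hb : Af a b b = b - a := Af_eq_of_ge ha hab le_rfl
    linarith [key, hnn, hb]

lemma uf'_nonneg (ha : 0 ≤ a) (hab : a < b) {y : ℝ} (hy : 0 ≤ y) : 0 ≤ uf' a b y :=
  sub_nonneg.2 (Af_le ha hab hy)

lemma uf_nonneg (ha : 0 ≤ a) (hab : a < b) {y : ℝ} (hy : 0 ≤ y) : 0 ≤ uf a b y := by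
  have key : ∫ t in (0:ℝ)..y, uf' a b t = uf a b y - uf a b 0 :=
    intervalIntegral.integral_eq_sub_of_hasDerivAt
      (fun t _ => hasDerivAt_uf hab t) ((continuous_uf' hab).intervalIntegrable _ _)
  have hnn : 0 ≤ ∫ t in (0:ℝ)..y, uf' a b t := by
    refine intervalIntegral.integral_nonneg hy fun t ht => uf'_nonneg ha hab ht.1
  rw [uf_zero] at key
  linarith [key, hnn, hab.le]

lemma uf_le (hab : a < b) {y : ℝ} (hy : 0 ≤ y) : uf a b y ≤ (b - a) * (1 + y) := by
  have hB : Bf a b y ≤ y * Af a b y := by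
    have h1 : Bf a b y ≤ ∫ t in (0:ℝ)..y, y * Qfun a b t := by
      refine intervalIntegral.integral_mono_on hy
        ((continuous_id.mul (continuous_Qfun hab)).intervalIntegrable _ _)
        (((continuous_const.mul (continuous_Qfun hab))).intervalIntegrable _ _)
        fun t ht => ?_
      exact mul_le_mul_of_nonneg_right ht.2 (Qfun_nonneg a b t)
    rwa [intervalIntegral.integral_const_mul] at h1
  unfold uf
  linarith

lemma hfun_nonneg (ha : 0 ≤ a) (hab : a < b) {y : ℝ} (hy : 0 ≤ y) : 0 ≤ hfun a b y :=
  add_nonneg (Qfun_nonneg a b y) (uf_nonneg ha hab hy)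

lemma hfun_le (hab : a < b) {y L : ℝ} (hy : 0 ≤ y) (hyL : y ≤ L) :
    hfun a b y ≤ 2 + (b - a) * (1 + L) := by
  have h1 := Qfun_le_two a b y
  have h2 := uf_le hab hy
  have h3 : (b - a) * (1 + y) ≤ (b - a) * (1 + L) := by nlinarith
  unfold hfun; linarith

end StatAux

namespace StatAux

variable {a b L : ℝ}

lemma hasDerivAt_phi1 (hab : a < b) (y : ℝ) :
    HasDerivAt (fun y => (uf a b y - uf' a b y) * Real.exp y)
      (hfun a b y * Real.exp y) y := by
  have h1 := (hasDerivAt_uf hab y).sub (hasDerivAt_uf' hab y)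
  have h2 := h1.mul (Real.hasDerivAt_exp y)
  refine h2.congr_deriv ?_
  unfold hfun; simp only [Pi.sub_apply, Pi.add_apply]; ring

lemma hasDerivAt_phi2 (hab : a < b) (y : ℝ) :
    HasDerivAt (fun y => -((uf a b y + uf' a b y) * Real.exp (-y)))
      (hfun a b y * Real.exp (-y)) y := by
  have hexp : HasDerivAt (fun y : ℝ => Real.exp (-y)) (-Real.exp (-y)) y := by
    exact (hasDerivAt_neg y).exp.congr_deriv (by ring)
  have h1 := (hasDerivAt_uf hab y).add (hasDerivAt_uf' hab y)
  have h2 := (h1.mul hexp).neg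
  refine h2.congr_deriv ?_
  unfold hfun; simp only [Pi.sub_apply, Pi.add_apply]; ring

lemma interval_key (ha : 0 ≤ a) (hab : a < b) (hbL : b ≤ L) {x : ℝ}
    (hx : x ∈ Set.Icc (0:ℝ) L) :
    ∫ y in (0:ℝ)..L, (1/2) * Real.exp (-|y - x|) * hfun a b y ≤ uf a b x := by
  obtain ⟨hx0, hxL⟩ := hx
  have hcont : Continuous (fun y => (1/2) * Real.exp (-|y - x|) * hfun a b y) := by
    have : Continuous fun y : ℝ => -|y - x| := (continuous_abs.comp
      (continuous_id.sub continuous_const)).neg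
    exact (continuous_const.mul this.rexp).mul (continuous_hfun hab)
  have hI1 : ∫ y in (0:ℝ)..x, hfun a b y * Real.exp y
      = (uf a b x - uf' a b x) * Real.exp x := by
    have := intervalIntegral.integral_eq_sub_of_hasDerivAt
      (f := fun y => (uf a b y - uf' a b y) * Real.exp y)
      (fun y _ => hasDerivAt_phi1 hab y)
      (((continuous_hfun hab).mul Real.continuous_exp).intervalIntegrable 0 x)
    rw [this]
    norm_num [uf_zero, uf'_zero]
  have hI2 : ∫ y in x..L, hfun a b y * Real.exp (-y)
      = (uf a b x + uf' a b x) * Real.exp (-x)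
        - (uf a b L + uf' a b L) * Real.exp (-L) := by
    have hce : Continuous (fun y : ℝ => Real.exp (-y)) :=
      Real.continuous_exp.comp continuous_neg
    have := intervalIntegral.integral_eq_sub_of_hasDerivAt
      (f := fun y => -((uf a b y + uf' a b y) * Real.exp (-y)))
      (fun y _ => hasDerivAt_phi2 hab y)
      (((continuous_hfun hab).mul hce).intervalIntegrable x L)
    rw [this]; ring
  have hE1 : ∫ y in (0:ℝ)..x, (1/2) * Real.exp (-|y - x|) * hfun a b y
      = ((1/2) * Real.exp (-x)) * ∫ y in (0:ℝ)..x, hfun a b y * Real.exp y := by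
    rw [← intervalIntegral.integral_const_mul]
    refine intervalIntegral.integral_congr fun y hy => ?_
    rw [Set.uIcc_of_le hx0] at hy
    have habs : |y - x| = x - y := by
      rw [abs_of_nonpos (by linarith [hy.2])]; ring
    rw [habs, show -(x - y) = y + (-x) by ring, Real.exp_add]
    ring
  have hE2 : ∫ y in x..L, (1/2) * Real.exp (-|y - x|) * hfun a b y
      = ((1/2) * Real.exp x) * ∫ y in x..L, hfun a b y * Real.exp (-y) := by
    rw [← intervalIntegral.integral_const_mul]
    refine intervalIntegral.integral_congr fun y hy => ?_
    rw [Set.uIcc_of_le hxL] at hy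
    have habs : |y - x| = y - x := abs_of_nonneg (by linarith [hy.1])
    rw [habs, show -(y - x) = x + (-y) by ring, Real.exp_add]
    ring
  have hsplit : ∫ y in (0:ℝ)..L, (1/2) * Real.exp (-|y - x|) * hfun a b y
      = (∫ y in (0:ℝ)..x, (1/2) * Real.exp (-|y - x|) * hfun a b y)
        + ∫ y in x..L, (1/2) * Real.exp (-|y - x|) * hfun a b y :=
    (intervalIntegral.integral_add_adjacent_intervals
      (hcont.intervalIntegrable 0 x) (hcont.intervalIntegrable x L)).symm
  rw [hsplit, hE1, hE2, hI1, hI2]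
  have hmm : Real.exp (-x) * Real.exp x = 1 := by
    rw [← Real.exp_add]; simp
  have hnnL : 0 ≤ uf a b L + uf' a b L :=
    add_nonneg (uf_nonneg ha hab (le_trans hx0 hxL)) (uf'_nonneg ha hab (le_trans hx0 hxL))
  have hpos : 0 < Real.exp x * Real.exp (-L) := by positivity
  have e1 : 1/2 * Real.exp (-x) * ((uf a b x - uf' a b x) * Real.exp x)
      = 1/2 * (uf a b x - uf' a b x) := by
    calc 1/2 * Real.exp (-x) * ((uf a b x - uf' a b x) * Real.exp x)
        = 1/2 * (uf a b x - uf' a b x) * (Real.exp (-x) * Real.exp x) := by ring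
      _ = 1/2 * (uf a b x - uf' a b x) := by rw [hmm]; ring
  have e2 : 1/2 * Real.exp x * ((uf a b x + uf' a b x) * Real.exp (-x)
        - (uf a b L + uf' a b L) * Real.exp (-L))
      = 1/2 * (uf a b x + uf' a b x)
        - 1/2 * (uf a b L + uf' a b L) * (Real.exp x * Real.exp (-L)) := by
    calc 1/2 * Real.exp x * ((uf a b x + uf' a b x) * Real.exp (-x)
          - (uf a b L + uf' a b L) * Real.exp (-L))
        = 1/2 * (uf a b x + uf' a b x) * (Real.exp (-x) * Real.exp x)
          - 1/2 * (uf a b L + uf' a b L) * (Real.exp x * Real.exp (-L)) := by ring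
      _ = _ := by rw [hmm]; ring
  rw [e1, e2]
  nlinarith [mul_nonneg hnnL hpos.le]

end StatAux

namespace StatAux

variable {a b L : ℝ}

lemma key_ENN (ha : 0 ≤ a) (hab : a < b) (hbL : b ≤ L) {x : ℝ}
    (hx : x ∈ Set.Icc (0:ℝ) L) :
    ENNReal.ofReal (Qfun a b x) + (∫⁻ t, (if x + t ∈ Set.Icc (0:ℝ) L
        then ENNReal.ofReal (hfun a b (x + t)) else 0) ∂lapMeasure)
      ≤ ENNReal.ofReal (hfun a b x) := by
  have hL0 : (0:ℝ) ≤ L := le_trans (le_trans ha hab.le) hbL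
  have hba : (0:ℝ) ≤ b - a := sub_nonneg.2 hab.le
  have hdens : Measurable fun t : ℝ => ENNReal.ofReal ((1 / 2) * Real.exp (-|t|)) := by
    fun_prop
  have hmeas_hfun : Measurable (hfun a b) := (continuous_hfun hab).measurable
  have hmeasg : Measurable fun t : ℝ => (if x + t ∈ Set.Icc (0:ℝ) L
      then ENNReal.ofReal (hfun a b (x + t)) else 0) := by
    have h1 : Measurable fun z : ℝ => (if z ∈ Set.Icc (0:ℝ) L
        then ENNReal.ofReal (hfun a b z) else 0) :=
      Measurable.ite measurableSet_Icc hmeas_hfun.ennreal_ofReal measurable_const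
    exact h1.comp (measurable_id.const_add x)
  set greal : ℝ → ℝ := fun t => (1/2) * Real.exp (-|t|) *
    (if x + t ∈ Set.Icc (0:ℝ) L then hfun a b (x + t) else 0) with hgreal
  have hgreal_meas : Measurable greal := by
    have h1 : Measurable fun z : ℝ => (if z ∈ Set.Icc (0:ℝ) L then hfun a b z else 0) :=
      Measurable.ite measurableSet_Icc hmeas_hfun measurable_const
    exact (measurable_const.mul (by fun_prop)).mul (h1.comp (measurable_id.const_add x))
  have hgreal_nonneg : ∀ t, 0 ≤ greal t := by
    intro t
    refine mul_nonneg (by positivity) ?_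
    split_ifs with hmem
    · exact hfun_nonneg ha hab hmem.1
    · exact le_rfl
  have step1 : (∫⁻ t, (if x + t ∈ Set.Icc (0:ℝ) L
      then ENNReal.ofReal (hfun a b (x + t)) else 0) ∂lapMeasure)
      = ∫⁻ t, ENNReal.ofReal (greal t) := by
    rw [lapMeasure, lintegral_withDensity_eq_lintegral_mul volume hdens hmeasg]
    refine lintegral_congr fun t => ?_
    simp only [Pi.mul_apply, hgreal]
    split_ifs with hmem
    · exact (ENNReal.ofReal_mul (by positivity)).symm
    · simp
  have hM : (0:ℝ) ≤ (1/2) * (2 + (b - a) * (1 + L)) := by positivity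
  have hint : Integrable greal := by
    have hbound : Integrable (Set.indicator (Set.Icc (-x) (L - x))
        (fun _ : ℝ => (1/2) * (2 + (b - a) * (1 + L)))) :=
      (integrable_indicator_iff measurableSet_Icc).2
        (integrableOn_const measure_Icc_lt_top.ne)
    refine hbound.mono' hgreal_meas.aestronglyMeasurable
      (Filter.Eventually.of_forall fun t => ?_)
    rw [Real.norm_of_nonneg (hgreal_nonneg t)]
    by_cases hmem : x + t ∈ Set.Icc (0:ℝ) L
    · have ht : t ∈ Set.Icc (-x) (L - x) := by
        constructor
        · linarith [hmem.1]
        · linarith [hmem.2]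
      rw [Set.indicator_of_mem ht]
      have h1 : Real.exp (-|t|) ≤ 1 := Real.exp_le_one_iff.2 (neg_nonpos.2 (abs_nonneg t))
      have h2 : hfun a b (x + t) ≤ 2 + (b - a) * (1 + L) :=
        hfun_le hab hmem.1 hmem.2
      have h3 : 0 ≤ hfun a b (x + t) := hfun_nonneg ha hab hmem.1
      simp only [hgreal, if_pos hmem]
      nlinarith [Real.exp_pos (-|t|)]
    · simp only [hgreal, if_neg hmem, mul_zero]
      exact Set.indicator_nonneg (fun _ _ => hM) t
  have step2 : (∫⁻ t, ENNReal.ofReal (greal t))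
      = ENNReal.ofReal (∫ t, greal t) :=
    (MeasureTheory.ofReal_integral_eq_lintegral_ofReal hint
      (Filter.Eventually.of_forall hgreal_nonneg)).symm
  set W : ℝ → ℝ := fun z => (1/2) * Real.exp (-|z - x|) *
    (if z ∈ Set.Icc (0:ℝ) L then hfun a b z else 0) with hW
  have step3 : (∫ t, greal t) = ∫ z, W z := by
    have : greal = fun t => W (t + x) := by
      funext t
      simp only [hgreal, hW, add_sub_cancel_right, add_comm x t]
    rw [this, integral_add_right_eq_self W x]
  have step4 : (∫ z, W z) = ∫ y in (0:ℝ)..L, (1/2) * Real.exp (-|y - x|) * hfun a b y := by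
    have hWind : W = Set.indicator (Set.Icc (0:ℝ) L)
        (fun z => (1/2) * Real.exp (-|z - x|) * hfun a b z) := by
      funext z
      by_cases hmem : z ∈ Set.Icc (0:ℝ) L
      · rw [Set.indicator_of_mem hmem]; simp only [hW, if_pos hmem]
      · rw [Set.indicator_of_notMem hmem]; simp only [hW, if_neg hmem, mul_zero]
    rw [hWind, integral_indicator measurableSet_Icc,
      MeasureTheory.integral_Icc_eq_integral_Ioc,
      ← intervalIntegral.integral_of_le hL0]
  have step5 : (∫ t, greal t) ≤ uf a b x := by
    rw [step3, step4]; exact interval_key ha hab hbL hx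
  calc ENNReal.ofReal (Qfun a b x) + (∫⁻ t, (if x + t ∈ Set.Icc (0:ℝ) L
        then ENNReal.ofReal (hfun a b (x + t)) else 0) ∂lapMeasure)
      ≤ ENNReal.ofReal (Qfun a b x) + ENNReal.ofReal (uf a b x) := by
        rw [step1, step2]
        exact add_le_add_right (ENNReal.ofReal_le_ofReal step5) _
    _ = ENNReal.ofReal (hfun a b x) := by
        rw [← ENNReal.ofReal_add (Qfun_nonneg a b x) (uf_nonneg ha hab hx.1)]
        rfl

end StatAux

namespace StatAux

/-- Deterministic walk along a finite vector of steps. -/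
def pwalk (k : ℕ) (x : ℝ) (v : Fin k → ℝ) (j : ℕ) : ℝ :=
  x + ∑ i ∈ Finset.range j, if h : i < k then v ⟨i, h⟩ else 0

/-- The integrand of the `k`-th term of `Ffun`, as a function of the steps. -/
def bodyF (a b L c : ℝ) (k : ℕ) (x : ℝ) (v : Fin k → ℝ) : ℝ≥0∞ :=
  if ∀ j ≤ k, pwalk k x v j ∈ Set.Icc 0 L
    then ENNReal.ofReal (c ^ k * Qfun a b (pwalk k x v k)) else 0

/-- The `k`-th term of `Ffun` as an integral over the product measure. -/
def Gk (a b L c : ℝ) (k : ℕ) (x : ℝ) : ℝ≥0∞ :=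
  ∫⁻ v, bodyF a b L c k x v ∂(Measure.pi fun _ : Fin k => lapMeasure)

variable {a b L c : ℝ}

lemma pwalk_zero (k : ℕ) (x : ℝ) (v : Fin k → ℝ) : pwalk k x v 0 = x := by
  simp [pwalk]

lemma pwalk_fin_zero (x : ℝ) (v : Fin 0 → ℝ) (j : ℕ) : pwalk 0 x v j = x := by
  simp [pwalk]

lemma pwalk_cons (k : ℕ) (x t : ℝ) (v : Fin k → ℝ) (j : ℕ) :
    pwalk (k + 1) x (Fin.cons t v) (j + 1) = pwalk k (x + t) v j := by
  unfold pwalk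
  rw [Finset.sum_range_succ']
  have h0 : (if h : 0 < k + 1 then (Fin.cons t v : Fin (k+1) → ℝ) ⟨0, h⟩ else 0) = t := by
    rw [dif_pos (Nat.succ_pos k), Fin.mk_zero, Fin.cons_zero]
  have hsucc : ∀ i, (if h : i + 1 < k + 1 then (Fin.cons t v : Fin (k+1) → ℝ) ⟨i + 1, h⟩ else 0)
      = if h : i < k then v ⟨i, h⟩ else 0 := by
    intro i
    by_cases h : i < k
    · rw [dif_pos (Nat.succ_lt_succ h),
        show (⟨i + 1, Nat.succ_lt_succ h⟩ : Fin (k + 1)) = Fin.succ ⟨i, h⟩ from rfl,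
        Fin.cons_succ, dif_pos h]
    · rw [dif_neg (fun hh => h (Nat.lt_of_succ_lt_succ hh)), dif_neg h]
  simp only [hsucc, h0]
  ring

lemma measurable_pwalk (k j : ℕ) :
    Measurable (fun p : ℝ × (Fin k → ℝ) => pwalk k p.1 p.2 j) := by
  unfold pwalk
  refine measurable_fst.add (Finset.measurable_sum _ fun i _ => ?_)
  by_cases h : i < k
  · simp only [dif_pos h]
    exact (measurable_pi_apply _).comp measurable_snd
  · simp only [dif_neg h]
    exact measurable_const

lemma measurable_bodyF (k : ℕ) :
    Measurable (fun p : ℝ × (Fin k → ℝ) => bodyF a b L c k p.1 p.2) := by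
  have hset : MeasurableSet {p : ℝ × (Fin k → ℝ) |
      ∀ j ≤ k, pwalk k p.1 p.2 j ∈ Set.Icc (0:ℝ) L} := by
    have heq : {p : ℝ × (Fin k → ℝ) | ∀ j ≤ k, pwalk k p.1 p.2 j ∈ Set.Icc (0:ℝ) L}
        = ⋂ j ∈ Set.Iic k, (fun p : ℝ × (Fin k → ℝ) => pwalk k p.1 p.2 j) ⁻¹'
          (Set.Icc (0:ℝ) L) := by
      ext p; simp [Set.mem_iInter]
    rw [heq]
    exact MeasurableSet.biInter (Set.to_countable _)
      fun j _ => (measurable_pwalk k j) measurableSet_Icc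
  have hval : Measurable fun p : ℝ × (Fin k → ℝ) =>
      ENNReal.ofReal (c ^ k * Qfun a b (pwalk k p.1 p.2 k)) :=
    (((measurable_Qfun a b).comp (measurable_pwalk k k)).const_mul _).ennreal_ofReal
  have heq2 : (fun p : ℝ × (Fin k → ℝ) => bodyF a b L c k p.1 p.2)
      = fun p => if p ∈ {p : ℝ × (Fin k → ℝ) |
          ∀ j ≤ k, pwalk k p.1 p.2 j ∈ Set.Icc (0:ℝ) L}
        then ENNReal.ofReal (c ^ k * Qfun a b (pwalk k p.1 p.2 k)) else 0 := by
    funext p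
    by_cases hp : ∀ j ≤ k, pwalk k p.1 p.2 j ∈ Set.Icc (0:ℝ) L
    · simp only [bodyF, if_pos hp, Set.mem_setOf_eq]
    · simp only [bodyF, if_neg hp, Set.mem_setOf_eq]
  rw [heq2]
  exact Measurable.ite hset hval measurable_const

lemma measurable_bodyF_right (k : ℕ) (x : ℝ) :
    Measurable (fun v : Fin k → ℝ => bodyF a b L c k x v) :=
  (measurable_bodyF k).comp (measurable_const.prodMk measurable_id)

lemma measurable_Gk [IsProbabilityMeasure lapMeasure] (k : ℕ) :
    Measurable (Gk a b L c k) :=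
  Measurable.lintegral_prod_right (measurable_bodyF k)

lemma Gk_zero_of_not_mem [IsProbabilityMeasure lapMeasure] (k : ℕ) {x : ℝ}
    (hx : x ∉ Set.Icc (0:ℝ) L) : Gk a b L c k x = 0 := by
  have hb : ∀ v : Fin k → ℝ, bodyF a b L c k x v = 0 := by
    intro v
    simp only [bodyF]
    exact if_neg fun H => hx (by simpa [pwalk_zero] using H 0 (Nat.zero_le _))
  simp [Gk, hb]

lemma Gk_zero [IsProbabilityMeasure lapMeasure] (x : ℝ) :
    Gk a b L c 0 x = if x ∈ Set.Icc (0:ℝ) L then ENNReal.ofReal (Qfun a b x) else 0 := by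
  have hb : ∀ v : Fin 0 → ℝ, bodyF a b L c 0 x v
      = if x ∈ Set.Icc (0:ℝ) L then ENNReal.ofReal (Qfun a b x) else 0 := by
    intro v
    simp only [bodyF]
    refine if_congr ?_ ?_ rfl
    · constructor
      · intro H; simpa [pwalk_fin_zero] using H 0 le_rfl
      · intro hx j _; simpa [pwalk_fin_zero] using hx
    · rw [pwalk_fin_zero, pow_zero, one_mul]
  simp only [Gk, hb]
  rw [lintegral_const]
  simp

lemma Gk_succ [IsProbabilityMeasure lapMeasure] (hc : 0 ≤ c) (k : ℕ) (x : ℝ) :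
    Gk a b L c (k + 1) x = if x ∈ Set.Icc (0:ℝ) L
      then ENNReal.ofReal c * ∫⁻ t, Gk a b L c k (x + t) ∂lapMeasure else 0 := by
  have hcons : ∀ (t : ℝ) (v : Fin k → ℝ), bodyF a b L c (k + 1) x (Fin.cons t v)
      = if x ∈ Set.Icc (0:ℝ) L then ENNReal.ofReal c * bodyF a b L c k (x + t) v else 0 := by
    intro t v
    have hiff : (∀ j ≤ k + 1, pwalk (k + 1) x (Fin.cons t v) j ∈ Set.Icc (0:ℝ) L)
        ↔ (x ∈ Set.Icc (0:ℝ) L ∧ ∀ j ≤ k, pwalk k (x + t) v j ∈ Set.Icc (0:ℝ) L) := by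
      constructor
      · intro H
        refine ⟨by simpa [pwalk_zero] using H 0 (Nat.zero_le _), fun j hj => ?_⟩
        have := H (j + 1) (Nat.succ_le_succ hj)
        rwa [pwalk_cons] at this
      · rintro ⟨h0, H⟩ j hj
        cases j with
        | zero => simpa [pwalk_zero] using h0
        | succ j =>
          rw [pwalk_cons]
          exact H j (Nat.le_of_succ_le_succ hj)
    by_cases hx : x ∈ Set.Icc (0:ℝ) L
    · rw [if_pos hx]
      simp only [bodyF]
      by_cases hcond : ∀ j ≤ k, pwalk k (x + t) v j ∈ Set.Icc (0:ℝ) L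
      · rw [if_pos (hiff.2 ⟨hx, hcond⟩), if_pos hcond, ← ENNReal.ofReal_mul hc]
        have hp : pwalk (k + 1) x (Fin.cons t v) (k + 1) = pwalk k (x + t) v k :=
          pwalk_cons k x t v k
        rw [hp]
        congr 1
        ring
      · rw [if_neg (fun H => hcond (hiff.1 H).2), if_neg hcond, mul_zero]
    · simp only [bodyF]
      rw [if_neg (fun H => hx (hiff.1 H).1), if_neg hx]
  have hmp := (measurePreserving_piFinSuccAbove (fun _ : Fin (k + 1) => lapMeasure) 0).symm
  have hmeasb : Measurable fun v : Fin (k + 1) → ℝ => bodyF a b L c (k + 1) x v :=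
    measurable_bodyF_right (k + 1) x
  have h1 : Gk a b L c (k + 1) x
      = ∫⁻ p : ℝ × (Fin k → ℝ), bodyF a b L c (k + 1) x
          ((MeasurableEquiv.piFinSuccAbove (fun _ : Fin (k + 1) => ℝ) 0).symm p)
        ∂(lapMeasure.prod (Measure.pi fun _ : Fin k => lapMeasure)) := by
    rw [Gk, ← hmp.lintegral_comp hmeasb]
  have h2 : ∀ p : ℝ × (Fin k → ℝ),
      bodyF a b L c (k + 1) x
          ((MeasurableEquiv.piFinSuccAbove (fun _ : Fin (k + 1) => ℝ) 0).symm p)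
        = if x ∈ Set.Icc (0:ℝ) L
          then ENNReal.ofReal c * bodyF a b L c k (x + p.1) p.2 else 0 := by
    rintro ⟨t, v⟩
    rw [MeasurableEquiv.piFinSuccAbove_symm_apply]
    simp only [Fin.insertNthEquiv, Fin.insertNth_zero']
    exact hcons t v
  rw [h1, lintegral_congr h2]
  by_cases hx : x ∈ Set.Icc (0:ℝ) L
  · simp only [if_pos hx]
    have hmeas2 : Measurable fun p : ℝ × (Fin k → ℝ) =>
        ENNReal.ofReal c * bodyF a b L c k (x + p.1) p.2 :=
      measurable_const.mul ((measurable_bodyF k).comp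
        ((measurable_fst.const_add x).prodMk measurable_snd))
    rw [lintegral_prod _ hmeas2.aemeasurable]
    have hin : ∀ t : ℝ, (∫⁻ v, ENNReal.ofReal c * bodyF a b L c k (x + t) v
        ∂(Measure.pi fun _ : Fin k => lapMeasure)) = ENNReal.ofReal c * Gk a b L c k (x + t) :=
      fun t => lintegral_const_mul _ (measurable_bodyF_right k (x + t))
    simp only [hin]
    exact lintegral_const_mul _ ((measurable_Gk k).comp (measurable_const.add measurable_id))
  · simp only [if_neg hx]
    simp
end StatAux

namespace StatAux

variable {a b L c : ℝ}

lemma map_vec_eq {Ω : Type*} [MeasurableSpace Ω] {μ : Measure Ω} {X : ℕ → Ω → ℝ}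
    (h : IsLaplaceWalk μ X) (k : ℕ) :
    μ.map (fun ω (i : Fin k) => X i ω) = Measure.pi (fun _ : Fin k => lapMeasure) := by
  haveI := h.prob
  haveI : IsProbabilityMeasure lapMeasure := by
    rw [← h.dist 0]; exact Measure.isProbabilityMeasure_map (h.meas 0).aemeasurable
  have hXm : Measurable fun ω (i : Fin k) => X i ω :=
    measurable_pi_lambda _ fun i => h.meas i
  refine (Measure.pi_eq fun s hs => ?_).symm
  classical
  set s' : ℕ → Set ℝ := fun j => if hj : j < k then s ⟨j, hj⟩ else Set.univ with hs'def
  have hs'meas : ∀ j ∈ Finset.range k, MeasurableSet (s' j) := by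
    intro j _
    simp only [hs'def]
    split_ifs with hjk
    · exact hs _
    · exact MeasurableSet.univ
  have hpre : (fun ω (i : Fin k) => X i ω) ⁻¹' (Set.univ.pi s)
      = ⋂ j ∈ Finset.range k, X j ⁻¹' s' j := by
    ext ω
    simp only [Set.mem_preimage, Set.mem_univ_pi, Set.mem_iInter, Finset.mem_range]
    constructor
    · intro H j hj
      simp only [Set.mem_preimage, hs'def, dif_pos hj]
      exact H ⟨j, hj⟩
    · intro H i
      have := H i i.isLt
      simpa [hs'def, dif_pos i.isLt] using this
  rw [Measure.map_apply hXm (MeasurableSet.univ_pi hs), hpre,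
    h.indep.measure_inter_preimage_eq_mul (Finset.range k) hs'meas]
  have hmap : ∀ j ∈ Finset.range k, μ (X j ⁻¹' s' j) = lapMeasure (s' j) := by
    intro j hj
    rw [← h.dist j, Measure.map_apply (h.meas j) (hs'meas j hj)]
  rw [Finset.prod_congr rfl hmap, ← Fin.prod_univ_eq_prod_range (fun j => lapMeasure (s' j)) k]
  refine Finset.prod_congr rfl fun i _ => ?_
  simp only [hs'def, dif_pos i.isLt, Fin.eta]

lemma sum_Gk_le [IsProbabilityMeasure lapMeasure] (ha : 0 ≤ a) (hab : a < b) (hbL : b ≤ L)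
    (hc0 : 0 ≤ c) (hc1 : c ≤ 1) :
    ∀ n : ℕ, ∀ x ∈ Set.Icc (0:ℝ) L,
      (∑ k ∈ Finset.range (n + 1), Gk a b L c k x) ≤ ENNReal.ofReal (hfun a b x) := by
  intro n
  induction n with
  | zero =>
    intro x hx
    rw [Finset.sum_range_one, Gk_zero, if_pos hx]
    refine ENNReal.ofReal_le_ofReal ?_
    have := uf_nonneg ha hab hx.1
    unfold hfun; linarith
  | succ n ih =>
    intro x hx
    rw [Finset.sum_range_succ']
    have h0 : Gk a b L c 0 x = ENNReal.ofReal (Qfun a b x) := by rw [Gk_zero, if_pos hx]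
    have hstep : (∑ k ∈ Finset.range (n + 1), Gk a b L c (k + 1) x)
        ≤ ∫⁻ t, (if x + t ∈ Set.Icc (0:ℝ) L
            then ENNReal.ofReal (hfun a b (x + t)) else 0) ∂lapMeasure := by
      have e1 : ∀ k ∈ Finset.range (n + 1), Gk a b L c (k + 1) x
          = ENNReal.ofReal c * ∫⁻ t, Gk a b L c k (x + t) ∂lapMeasure := by
        intro k _; rw [Gk_succ hc0, if_pos hx]
      rw [Finset.sum_congr rfl e1]
      calc (∑ k ∈ Finset.range (n + 1),
            ENNReal.ofReal c * ∫⁻ t, Gk a b L c k (x + t) ∂lapMeasure)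
          ≤ ∑ k ∈ Finset.range (n + 1), ∫⁻ t, Gk a b L c k (x + t) ∂lapMeasure := by
            refine Finset.sum_le_sum fun k _ => ?_
            calc ENNReal.ofReal c * ∫⁻ t, Gk a b L c k (x + t) ∂lapMeasure
                ≤ 1 * ∫⁻ t, Gk a b L c k (x + t) ∂lapMeasure :=
                  mul_le_mul_left (ENNReal.ofReal_le_one.2 hc1) _
              _ = _ := one_mul _
        _ = ∫⁻ t, (∑ k ∈ Finset.range (n + 1), Gk a b L c k (x + t)) ∂lapMeasure := by
            refine (lintegral_finset_sum _ fun k _ => ?_).symm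
            exact (measurable_Gk k).comp (measurable_const.add measurable_id)
        _ ≤ _ := by
            refine lintegral_mono fun t => ?_
            by_cases hm : x + t ∈ Set.Icc (0:ℝ) L
            · rw [if_pos hm]; exact ih (x + t) hm
            · rw [if_neg hm]
              have hz : ∀ k ∈ Finset.range (n + 1), Gk a b L c k (x + t) = 0 :=
                fun k _ => Gk_zero_of_not_mem k hm
              rw [Finset.sum_congr rfl hz]
              simp
    calc (∑ k ∈ Finset.range (n + 1), Gk a b L c (k + 1) x) + Gk a b L c 0 x
        ≤ (∫⁻ t, (if x + t ∈ Set.Icc (0:ℝ) L then ENNReal.ofReal (hfun a b (x + t)) else 0)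
            ∂lapMeasure) + ENNReal.ofReal (Qfun a b x) := by
          rw [h0]; exact add_le_add_left hstep _
      _ ≤ ENNReal.ofReal (hfun a b x) := by
          rw [add_comm]; exact key_ENN ha hab hbL hx

end StatAux

/-- for `ρ ∈ [−1, 0]` and `x ∈ [0,L]`,
`F_{a,b}(x, ρ, L) ≤ (b − a)(x + 1) + Q_{a,b}(x)`. -/
theorem Ffun_upper_nonpos (μ : Measure Ω) (X : ℕ → Ω → ℝ) (h : IsLaplaceWalk μ X)
    (L a b : ℝ) (hL : 0 < L) (hab : a < b)
    (hsub : Set.Icc a b ⊆ Set.Icc 0 L) (ρ : ℝ) (hρ : ρ ∈ Set.Icc (-1 : ℝ) 0)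
    (x : ℝ) (hx : x ∈ Set.Icc (0 : ℝ) L) :
    Ffun μ X a b ρ L x ≤ ENNReal.ofReal ((b - a) * (x + 1) + Qfun a b x) := by

  haveI := h.prob
  haveI hlap : IsProbabilityMeasure lapMeasure := by
    rw [← h.dist 0]; exact Measure.isProbabilityMeasure_map (h.meas 0).aemeasurable
  have ha : 0 ≤ a := (hsub (Set.left_mem_Icc.2 hab.le)).1
  have hbL : b ≤ L := (hsub (Set.right_mem_Icc.2 hab.le)).2
  have hc0 : (0:ℝ) ≤ 1 + ρ := by linarith [hρ.1]
  have hc1 : (1:ℝ) + ρ ≤ 1 := by linarith [hρ.2]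
  have hterm : ∀ (k : ℕ) (ω : Ω),
      (if ∀ i ≤ k, walk x X i ω ∈ Set.Icc 0 L
        then ENNReal.ofReal ((1 + ρ) ^ k * Qfun a b (walk x X k ω)) else 0)
      = StatAux.bodyF a b L (1 + ρ) k x (fun i : Fin k => X i ω) := by
    intro k ω
    have hw : ∀ j ≤ k, StatAux.pwalk k x (fun i : Fin k => X i ω) j = walk x X j ω := by
      intro j hj
      simp only [StatAux.pwalk, walk]
      congr 1
      refine Finset.sum_congr rfl fun i hi => ?_
      rw [dif_pos (lt_of_lt_of_le (Finset.mem_range.1 hi) hj)]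
    simp only [StatAux.bodyF]
    refine if_congr ?_ ?_ rfl
    · constructor
      · intro H j hj; rw [hw j hj]; exact H j hj
      · intro H j hj; rw [← hw j hj]; exact H j hj
    · rw [hw k le_rfl]
  have hFeq : Ffun μ X a b ρ L x = ∑' k, StatAux.Gk a b L (1 + ρ) k x := by
    rw [Ffun]
    have e1 : ∀ ω : Ω, (∑' k : ℕ, (if ∀ i ≤ k, walk x X i ω ∈ Set.Icc 0 L
        then ENNReal.ofReal ((1 + ρ) ^ k * Qfun a b (walk x X k ω)) else 0))
        = ∑' k : ℕ, StatAux.bodyF a b L (1 + ρ) k x (fun i : Fin k => X i ω) :=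
      fun ω => tsum_congr fun k => hterm k ω
    have e2 := lintegral_tsum (μ := μ)
      (f := fun (k : ℕ) (ω : Ω) => StatAux.bodyF a b L (1 + ρ) k x (fun i : Fin k => X i ω))
      (fun k => ((StatAux.measurable_bodyF_right k x).comp
        (measurable_pi_lambda _ fun i => h.meas i)).aemeasurable)
    rw [lintegral_congr e1, e2]
    refine tsum_congr fun k => ?_
    rw [StatAux.Gk, ← StatAux.map_vec_eq h k]
    exact (lintegral_map (StatAux.measurable_bodyF_right k x)
      (measurable_pi_lambda _ fun i => h.meas i)).symm
  rw [hFeq]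
  have hbound : ∀ n : ℕ, (∑ k ∈ Finset.range n, StatAux.Gk a b L (1 + ρ) k x)
      ≤ ENNReal.ofReal (StatAux.hfun a b x) := by
    intro n
    cases n with
    | zero => simp
    | succ n => exact StatAux.sum_Gk_le ha hab hbL hc0 hc1 n x hx
  refine le_trans (ENNReal.tsum_le_of_sum_range_le hbound) (ENNReal.ofReal_le_ofReal ?_)
  have h1 := StatAux.uf_le hab hx.1
  simp only [StatAux.hfun]
  linarith
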